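/- Let S be a symmetric N²×N² real matrix, h ∈ ℝ^{N²}, and let q : ℝ → ℝ^{N²} be differentiable with q′(t) = J_EZ(q(t), S(q(t) − h)) for all t. Then the discrete energy E(t) = −(δ²/2)(q(t)−h)ᵀ S (q(t)−h), the discrete enstrophy Z(t) = (δ²/2) q(t)ᵀ q(t), and the discrete total circulation C(t) = δ² Σ_i q_i(t) are all constant in t. -/

import Mathlib

open Matrix
open scoped Kronecker

noncomputable section

/-- The `N×N` cyclic shift matrix: `E i j = 1` iff `j ≡ i+1 (mod N)`. -/
def shiftE (N : ℕ) : Matrix (Fin N) (Fin N) ℝ :=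
  Matrix.of fun i j => if ((i : ℕ) + 1) % N = (j : ℕ) then 1 else 0

/-- The grid spacing `δ = 2π/N`. -/
def gridDelta (N : ℕ) : ℝ := 2 * Real.pi / N

/-- The central divided-difference matrix `D = (E - Eᵀ)/(2δ)`. -/
def Dmat (N : ℕ) : Matrix (Fin N) (Fin N) ℝ :=
  (2 * gridDelta N)⁻¹ • (shiftE N - (shiftE N)ᵀ)

/-- `D_x = I ⊗ D`. -/
def Dx (N : ℕ) : Matrix (Fin N × Fin N) (Fin N × Fin N) ℝ :=
  (1 : Matrix (Fin N) (Fin N) ℝ) ⊗ₖ Dmat N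

/-- `D_y = D ⊗ I`. -/
def Dy (N : ℕ) : Matrix (Fin N × Fin N) (Fin N × Fin N) ℝ :=
  Dmat N ⊗ₖ (1 : Matrix (Fin N) (Fin N) ℝ)

/-- `J_0(q, ψ) = (D_x q)∗(D_y ψ) − (D_y q)∗(D_x ψ)` (componentwise products). -/
def J0 (N : ℕ) (q ψ : Fin N × Fin N → ℝ) : Fin N × Fin N → ℝ :=
  (Dx N).mulVec q * (Dy N).mulVec ψ - (Dy N).mulVec q * (Dx N).mulVec ψ

/-- `J_E(q, ψ) = D_x(q ∗ D_y ψ) − D_y(q ∗ D_x ψ)`. -/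
def JE (N : ℕ) (q ψ : Fin N × Fin N → ℝ) : Fin N × Fin N → ℝ :=
  (Dx N).mulVec (q * (Dy N).mulVec ψ) - (Dy N).mulVec (q * (Dx N).mulVec ψ)

/-- `J_Z(q, ψ) = D_y((D_x q) ∗ ψ) − D_x((D_y q) ∗ ψ)`. -/
def JZ (N : ℕ) (q ψ : Fin N × Fin N → ℝ) : Fin N × Fin N → ℝ :=
  (Dy N).mulVec ((Dx N).mulVec q * ψ) - (Dx N).mulVec ((Dy N).mulVec q * ψ)

/-- The Arakawa energy–enstrophy bracket `J_EZ = (J_0 + J_E + J_Z)/3`. -/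
def JEZ (N : ℕ) (q ψ : Fin N × Fin N → ℝ) : Fin N × Fin N → ℝ :=
  (3 : ℝ)⁻¹ • (J0 N q ψ + JE N q ψ + JZ N q ψ)

section Aux

variable {N : ℕ}

lemma shiftE_row_sum (hN : 0 < N) (i : Fin N) : ∑ j, shiftE N i j = 1 := by
  rw [Finset.sum_eq_single (⟨((i : ℕ) + 1) % N, Nat.mod_lt _ hN⟩ : Fin N)]
  · simp [shiftE]
  · intro b _ hb
    simp only [shiftE, Matrix.of_apply, ite_eq_right_iff]
    intro hc
    exact absurd (Fin.ext hc.symm) hb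
  · intro habs; exact absurd (Finset.mem_univ _) habs

lemma shiftE_col_sum (hN : 0 < N) (j : Fin N) : ∑ i, shiftE N i j = 1 := by
  have hlt : ((j : ℕ) + (N - 1)) % N < N := Nat.mod_lt _ hN
  have hval : ∀ b : Fin N, ((b : ℕ) + 1) % N = (j : ℕ) → (b : ℕ) = ((j : ℕ) + (N - 1)) % N := by
    intro b hb
    have : ((j : ℕ) + (N - 1)) % N = (((b : ℕ) + 1) % N + (N - 1)) % N := by rw [hb]
    rw [this, Nat.mod_add_mod, show (b : ℕ) + 1 + (N - 1) = (b : ℕ) + N by omega,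
      Nat.add_mod_right, Nat.mod_eq_of_lt b.isLt]
  have hanchor : ((((j : ℕ) + (N - 1)) % N) + 1) % N = (j : ℕ) := by
    rw [Nat.mod_add_mod, show (j : ℕ) + (N - 1) + 1 = (j : ℕ) + N by omega,
      Nat.add_mod_right, Nat.mod_eq_of_lt j.isLt]
  rw [Finset.sum_eq_single (⟨((j : ℕ) + (N - 1)) % N, hlt⟩ : Fin N)]
  · simp [shiftE, hanchor]
  · intro b _ hb
    simp only [shiftE, Matrix.of_apply, ite_eq_right_iff]
    intro hc
    exact absurd (Fin.ext (hval b hc)) hb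
  · intro habs; exact absurd (Finset.mem_univ _) habs

lemma Dmat_row_sum (hN : 0 < N) (i : Fin N) : ∑ j, Dmat N i j = 0 := by
  simp only [Dmat, Matrix.smul_apply, Matrix.sub_apply, Matrix.transpose_apply, smul_eq_mul]
  rw [← Finset.mul_sum, Finset.sum_sub_distrib, shiftE_row_sum hN, shiftE_col_sum hN]
  simp

lemma Dmat_transpose : (Dmat N)ᵀ = -Dmat N := by
  unfold Dmat
  rw [Matrix.transpose_smul, Matrix.transpose_sub, Matrix.transpose_transpose, ← smul_neg,
    neg_sub]

lemma Dmat_skew (a b : Fin N) : Dmat N a b = -Dmat N b a := by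
  have := congrFun (congrFun (Dmat_transpose (N := N)) b) a
  simpa [Matrix.transpose_apply, Matrix.neg_apply] using this

lemma Dx_transpose : (Dx N)ᵀ = -Dx N := by
  ext ⟨i, j⟩ ⟨k, l⟩
  simp only [Dx, Matrix.transpose_apply, Matrix.kroneckerMap_apply, Matrix.neg_apply,
    Matrix.one_apply]
  rw [Dmat_skew]
  by_cases h : k = i <;> by_cases h' : i = k <;> simp_all <;> ring

lemma Dy_transpose : (Dy N)ᵀ = -Dy N := by
  ext ⟨i, j⟩ ⟨k, l⟩
  simp only [Dy, Matrix.transpose_apply, Matrix.kroneckerMap_apply, Matrix.neg_apply,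
    Matrix.one_apply]
  rw [Dmat_skew]
  by_cases h : l = j <;> by_cases h' : j = l <;> simp_all <;> ring

lemma DxDy_comm : Dx N * Dy N = Dy N * Dx N := by
  unfold Dx Dy
  rw [← Matrix.mul_kronecker_mul, ← Matrix.mul_kronecker_mul]
  simp

lemma skew_dot {n : Type*} [Fintype n] {A : Matrix n n ℝ} (hA : Aᵀ = -A) (u v : n → ℝ) :
    u ⬝ᵥ A.mulVec v = -(A.mulVec u ⬝ᵥ v) := by
  rw [Matrix.dotProduct_mulVec, ← Matrix.mulVec_transpose, hA, Matrix.neg_mulVec,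
    neg_dotProduct]

lemma dp_comm3 {n : Type*} [Fintype n] (a b c : n → ℝ) : a ⬝ᵥ (b * c) = b ⬝ᵥ (a * c) := by
  simp only [dotProduct, Pi.mul_apply]
  exact Finset.sum_congr rfl fun i _ => by ring

lemma dp_comm3' {n : Type*} [Fintype n] (a b c : n → ℝ) : a ⬝ᵥ (b * c) = c ⬝ᵥ (b * a) := by
  simp only [dotProduct, Pi.mul_apply]
  exact Finset.sum_congr rfl fun i _ => by ring

lemma Dx_mulVec_one (hN : 0 < N) : (Dx N).mulVec (fun _ => (1 : ℝ)) = 0 := by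
  ext ⟨i, j⟩
  simp only [Matrix.mulVec, dotProduct, Fintype.sum_prod_type, Dx,
    Matrix.kroneckerMap_apply, mul_one, Pi.zero_apply]
  have : ∀ k : Fin N, ∑ l, (1 : Matrix (Fin N) (Fin N) ℝ) i k * Dmat N j l
      = (1 : Matrix (Fin N) (Fin N) ℝ) i k * ∑ l, Dmat N j l := fun k => by
    rw [Finset.mul_sum]
  rw [Finset.sum_congr rfl fun k _ => this k]
  simp [Dmat_row_sum hN]

lemma Dy_mulVec_one (hN : 0 < N) : (Dy N).mulVec (fun _ => (1 : ℝ)) = 0 := by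
  ext ⟨i, j⟩
  simp only [Matrix.mulVec, dotProduct, Fintype.sum_prod_type, Dy,
    Matrix.kroneckerMap_apply, mul_one, Pi.zero_apply]
  have : ∀ k : Fin N, ∑ l, Dmat N i k * (1 : Matrix (Fin N) (Fin N) ℝ) j l
      = Dmat N i k * ∑ l, (1 : Matrix (Fin N) (Fin N) ℝ) j l := fun k => by
    rw [Finset.mul_sum]
  rw [Finset.sum_congr rfl fun k _ => this k]
  simp only [Matrix.one_apply, Finset.sum_ite_eq, Finset.mem_univ, if_true, mul_one]
  rw [Dmat_row_sum hN]

lemma dot_q_JEZ (q ψ : Fin N × Fin N → ℝ) : q ⬝ᵥ JEZ N q ψ = 0 := by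
  have h1 : q ⬝ᵥ J0 N q ψ + q ⬝ᵥ JE N q ψ = 0 := by
    unfold J0 JE
    rw [dotProduct_sub, dotProduct_sub, skew_dot Dx_transpose,
      skew_dot Dy_transpose, dp_comm3 q ((Dx N).mulVec q) ((Dy N).mulVec ψ),
      dp_comm3 q ((Dy N).mulVec q) ((Dx N).mulVec ψ)]
    ring
  have h2 : q ⬝ᵥ JZ N q ψ = 0 := by
    unfold JZ
    rw [dotProduct_sub, skew_dot Dy_transpose, skew_dot Dx_transpose,
      dp_comm3 ((Dy N).mulVec q) ((Dx N).mulVec q) ψ]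
    ring
  unfold JEZ
  rw [dotProduct_smul, dotProduct_add, dotProduct_add]
  simp only [smul_eq_mul]
  nlinarith [h1, h2]

lemma dot_psi_JEZ (q ψ : Fin N × Fin N → ℝ) : ψ ⬝ᵥ JEZ N q ψ = 0 := by
  have h1 : ψ ⬝ᵥ J0 N q ψ + ψ ⬝ᵥ JZ N q ψ = 0 := by
    unfold J0 JZ
    rw [dotProduct_sub, dotProduct_sub, skew_dot Dy_transpose,
      skew_dot Dx_transpose, dp_comm3' ((Dy N).mulVec ψ) ((Dx N).mulVec q) ψ,
      dp_comm3' ((Dx N).mulVec ψ) ((Dy N).mulVec q) ψ]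
    ring
  have h2 : ψ ⬝ᵥ JE N q ψ = 0 := by
    unfold JE
    rw [dotProduct_sub, skew_dot Dx_transpose, skew_dot Dy_transpose,
      dp_comm3' ((Dx N).mulVec ψ) q ((Dy N).mulVec ψ)]
    ring
  unfold JEZ
  rw [dotProduct_smul, dotProduct_add, dotProduct_add]
  simp only [smul_eq_mul]
  nlinarith [h1, h2]

lemma dot_one_JEZ (hN : 0 < N) (q ψ : Fin N × Fin N → ℝ) :
    (fun _ => (1 : ℝ)) ⬝ᵥ JEZ N q ψ = 0 := by
  have hone : ∀ a b : Fin N × Fin N → ℝ, (fun _ => (1 : ℝ)) ⬝ᵥ (a * b) = a ⬝ᵥ b := by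
    intro a b; simp [dotProduct]
  have h0 : (fun _ => (1 : ℝ)) ⬝ᵥ J0 N q ψ = 0 := by
    unfold J0
    rw [dotProduct_sub, hone, hone, skew_dot Dy_transpose, skew_dot Dx_transpose,
      Matrix.mulVec_mulVec, Matrix.mulVec_mulVec, DxDy_comm]
    ring
  have hE : (fun _ => (1 : ℝ)) ⬝ᵥ JE N q ψ = 0 := by
    unfold JE
    rw [dotProduct_sub, skew_dot Dx_transpose, skew_dot Dy_transpose,
      Dx_mulVec_one hN, Dy_mulVec_one hN, zero_dotProduct, zero_dotProduct]
    ring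
  have hZ : (fun _ => (1 : ℝ)) ⬝ᵥ JZ N q ψ = 0 := by
    unfold JZ
    rw [dotProduct_sub, skew_dot Dy_transpose, skew_dot Dx_transpose,
      Dx_mulVec_one hN, Dy_mulVec_one hN, zero_dotProduct, zero_dotProduct]
    ring
  unfold JEZ
  rw [dotProduct_smul, dotProduct_add, dotProduct_add, h0, hE, hZ]
  simp

lemma hasDerivAt_dotProduct {ι : Type*} [Fintype ι] {f g : ℝ → ι → ℝ} {f' g' : ι → ℝ} {t : ℝ}
    (hf : HasDerivAt f f' t) (hg : HasDerivAt g g' t) :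
    HasDerivAt (fun s => f s ⬝ᵥ g s) (f' ⬝ᵥ g t + f t ⬝ᵥ g') t := by
  have hfi := hasDerivAt_pi.1 hf
  have hgi := hasDerivAt_pi.1 hg
  have hsum : HasDerivAt (fun s => ∑ i, f s i * g s i)
      (∑ i, (f' i * g t i + f t i * g' i)) t :=
    HasDerivAt.fun_sum fun i _ => (hfi i).mul (hgi i)
  simpa [dotProduct, Finset.sum_add_distrib] using hsum

lemma hasDerivAt_mulVec {ι : Type*} [Fintype ι] (M : Matrix ι ι ℝ) {u : ℝ → ι → ℝ}
    {u' : ι → ℝ} {t : ℝ} (hu : HasDerivAt u u' t) :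
    HasDerivAt (fun s => M.mulVec (u s)) (M.mulVec u') t := by
  rw [hasDerivAt_pi]
  intro i
  simp only [Matrix.mulVec, dotProduct]
  exact HasDerivAt.fun_sum fun j _ => ((hasDerivAt_pi.1 hu) j).const_mul (M i j)

end Aux

/-- along any solution of `q′ = J_EZ(q, S(q−h))` with `S`
symmetric, the discrete energy `E(t) = −(δ²/2)(q−h)ᵀS(q−h)`, the discrete
enstrophy `Z(t) = (δ²/2) qᵀq` and the discrete total circulation
`C(t) = δ² Σ_i q_i` are all constant in time. -/
theorem JEZ_flow_conserves_energy_enstrophy_circulation (N : ℕ) (hN : 3 ≤ N)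
    (S : Matrix (Fin N × Fin N) (Fin N × Fin N) ℝ) (hSsymm : Sᵀ = S)
    (h : Fin N × Fin N → ℝ)
    (q : ℝ → (Fin N × Fin N → ℝ))
    (hq : ∀ t : ℝ, HasDerivAt q (JEZ N (q t) (S.mulVec (q t - h))) t) :
    (∀ t s : ℝ,
        -(gridDelta N ^ 2 / 2) * ((q t - h) ⬝ᵥ S.mulVec (q t - h))
          = -(gridDelta N ^ 2 / 2) * ((q s - h) ⬝ᵥ S.mulVec (q s - h))) ∧
    (∀ t s : ℝ,
        gridDelta N ^ 2 / 2 * (q t ⬝ᵥ q t) = gridDelta N ^ 2 / 2 * (q s ⬝ᵥ q s)) ∧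
    (∀ t s : ℝ,
        gridDelta N ^ 2 * ∑ i, q t i = gridDelta N ^ 2 * ∑ i, q s i) := by
  have hN0 : 0 < N := by omega
  set v : ℝ → (Fin N × Fin N → ℝ) := fun t => JEZ N (q t) (S.mulVec (q t - h)) with hv
  have hqd : ∀ t : ℝ, HasDerivAt q (v t) t := hq
  have hsub : ∀ t : ℝ, HasDerivAt (fun s => q s - h) (v t) t := fun t => (hqd t).sub_const h
  have hpsi_dot : ∀ t : ℝ, S.mulVec (q t - h) ⬝ᵥ v t = 0 := fun t => dot_psi_JEZ _ _
  refine ⟨?_, ?_, ?_⟩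
  · -- energy
    have hF : ∀ t : ℝ, HasDerivAt (fun s => (q s - h) ⬝ᵥ S.mulVec (q s - h)) 0 t := by
      intro t
      have hd := hasDerivAt_dotProduct (hsub t) (hasDerivAt_mulVec S (hsub t))
      have e1 : (q t - h) ⬝ᵥ S.mulVec (v t) = S.mulVec (q t - h) ⬝ᵥ v t := by
        rw [Matrix.dotProduct_mulVec, ← Matrix.mulVec_transpose, hSsymm]
      have e2 : v t ⬝ᵥ S.mulVec (q t - h) = 0 := by
        rw [dotProduct_comm]; exact hpsi_dot t
      rw [show (0 : ℝ) = v t ⬝ᵥ S.mulVec (q t - h) + (q t - h) ⬝ᵥ S.mulVec (v t) by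
        rw [e1, e2, hpsi_dot t]; ring]
      exact hd
    have hc := is_const_of_deriv_eq_zero (f := fun s => (q s - h) ⬝ᵥ S.mulVec (q s - h))
      (fun t => (hF t).differentiableAt) (fun t => (hF t).deriv)
    intro t s
    have hce : (q t - h) ⬝ᵥ S.mulVec (q t - h) = (q s - h) ⬝ᵥ S.mulVec (q s - h) := hc t s
    rw [hce]
  · -- enstrophy
    have hF : ∀ t : ℝ, HasDerivAt (fun s => q s ⬝ᵥ q s) 0 t := by
      intro t
      have hd := hasDerivAt_dotProduct (hqd t) (hqd t)
      have e2 : v t ⬝ᵥ q t = 0 := by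
        rw [dotProduct_comm]; exact dot_q_JEZ _ _
      rw [show (0 : ℝ) = v t ⬝ᵥ q t + q t ⬝ᵥ v t by
        rw [e2, dot_q_JEZ (q t)]; ring]
      exact hd
    have hc := is_const_of_deriv_eq_zero (f := fun s => q s ⬝ᵥ q s)
      (fun t => (hF t).differentiableAt) (fun t => (hF t).deriv)
    intro t s
    have hce : q t ⬝ᵥ q t = q s ⬝ᵥ q s := hc t s
    rw [hce]
  · -- circulation
    have hF : ∀ t : ℝ, HasDerivAt (fun s => ∑ i, q s i) 0 t := by
      intro t
      have hd : HasDerivAt (fun s => ∑ i, q s i) (∑ i, v t i) t :=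
        HasDerivAt.fun_sum fun i _ => (hasDerivAt_pi.1 (hqd t)) i
      have e : (∑ i, v t i) = 0 := by
        have := dot_one_JEZ hN0 (q t) (S.mulVec (q t - h))
        simpa [dotProduct] using this
      rwa [e] at hd
    have hc := is_const_of_deriv_eq_zero (f := fun s => ∑ i, q s i)
      (fun t => (hF t).differentiableAt) (fun t => (hF t).deriv)
    intro t s
    have hce : (∑ i, q t i) = ∑ i, q s i := hc t s
    rw [hce]
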